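/- The real span with coefficients summing to zero of the set of unitary conjugation maps (restricted to traceless Hermitian d×d matrices) equals the space of all real-linear maps on the space of traceless Hermitian d×d matrices. That is, every real-linear map L on {A ∈ M_d(ℂ) : A=A†, tr A=0} can be written L = Σ_i λ_i Ad_{U_i} with λ_i ∈ ℝ, Σ λ_i = 0, and U_i unitary. -/

import Mathlib

open Matrix

noncomputable section Stmt3Aux

variable {d : ℕ}

/-- coefficient-sum-`c` representation by unitary conjugations, valid on all matrices -/
def RepC (d : ℕ) (c : ℝ) (f : Matrix (Fin d) (Fin d) ℂ → Matrix (Fin d) (Fin d) ℂ) : Prop :=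
  ∃ (ι : Type) (_ : Fintype ι) (lam : ι → ℝ) (U : ι → Matrix (Fin d) (Fin d) ℂ),
    ∑ i, lam i = c ∧ (∀ i, U i ∈ Matrix.unitaryGroup (Fin d) ℂ) ∧
    ∀ A, f A = ∑ i, lam i • (U i * A * (U i)ᴴ)

theorem RepC.congr {c f g} (h : RepC d c f) (hfg : ∀ A, f A = g A) : RepC d c g := by
  obtain ⟨ι, hι, lam, U, h1, h2, h3⟩ := h
  exact ⟨ι, hι, lam, U, h1, h2, fun A => (hfg A) ▸ h3 A⟩

theorem RepC.add {c₁ c₂ f g} (hf : RepC d c₁ f) (hg : RepC d c₂ g) :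
    RepC d (c₁ + c₂) (fun A => f A + g A) := by
  obtain ⟨ι, hι, lam, U, h1, h2, h3⟩ := hf
  obtain ⟨ι', hι', lam', U', h1', h2', h3'⟩ := hg
  refine ⟨ι ⊕ ι', by infer_instance, Sum.elim lam lam', Sum.elim U U', ?_, ?_, ?_⟩
  · simp [Fintype.sum_sum_type, h1, h1']
  · rintro (i | i) <;> simp [h2, h2']
  · intro A
    simp [Fintype.sum_sum_type, h3, h3']

theorem RepC.zero : RepC d 0 (fun _ => 0) :=
  ⟨PEmpty, by infer_instance, fun _ => 0, fun _ => 1, by simp, by simp, by simp⟩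

theorem RepC.sum {ι₀ : Type*} (s : Finset ι₀) (c : ι₀ → ℝ)
    (f : ι₀ → Matrix (Fin d) (Fin d) ℂ → Matrix (Fin d) (Fin d) ℂ)
    (h : ∀ a ∈ s, RepC d (c a) (f a)) :
    RepC d (∑ a ∈ s, c a) (fun A => ∑ a ∈ s, f a A) := by
  classical
  induction s using Finset.induction_on with
  | empty => simpa using RepC.zero
  | insert x s' hx ih =>
    rw [Finset.sum_insert hx]
    exact (RepC.congr ((h x (by simp)).add (ih (fun a ha => h a (by simp [ha]))))
      (fun A => by rw [Finset.sum_insert hx]))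

theorem RepC.comp {c₁ c₂ f g} (hf : RepC d c₁ f) (hg : RepC d c₂ g) :
    RepC d (c₁ * c₂) (fun A => f (g A)) := by
  obtain ⟨ι, hι, lam, U, h1, h2, h3⟩ := hf
  obtain ⟨ι', hι', lam', U', h1', h2', h3'⟩ := hg
  refine ⟨ι × ι', by infer_instance, fun p => lam p.1 * lam' p.2,
    fun p => U p.1 * U' p.2, ?_, ?_, ?_⟩
  · rw [← h1, ← h1', Fintype.sum_prod_type, Finset.sum_mul_sum]
  · intro p
    exact mul_mem (h2 p.1) (h2' p.2)
  · intro A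
    show f (g A) = _
    rw [h3 (g A), h3' A, Fintype.sum_prod_type]
    refine Finset.sum_congr rfl fun i _ => ?_
    rw [Matrix.mul_sum, Matrix.sum_mul, Finset.smul_sum]
    refine Finset.sum_congr rfl fun j _ => ?_
    simp only [Matrix.mul_smul, Matrix.smul_mul, smul_smul, Matrix.conjTranspose_mul,
      Matrix.mul_assoc, mul_comm (lam i)]

def Pm (d : ℕ) (σ : Equiv.Perm (Fin d)) : Matrix (Fin d) (Fin d) ℂ :=
  Matrix.of fun m n => if σ n = m then 1 else 0

theorem Pm_conjTranspose (σ : Equiv.Perm (Fin d)) : (Pm d σ)ᴴ = Pm d σ⁻¹ := by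
  ext m n
  simp only [Pm, Matrix.conjTranspose_apply, Matrix.of_apply]
  by_cases h : σ m = n
  · rw [if_pos h, if_pos (by rw [← h]; simp), star_one]
  · rw [if_neg h, if_neg (fun hc => h (by rw [← hc]; simp)), star_zero]

theorem Pm_mul (σ τ : Equiv.Perm (Fin d)) : Pm d σ * Pm d τ = Pm d (σ * τ) := by
  ext m n
  simp only [Pm, Matrix.mul_apply, Matrix.of_apply]
  rw [Finset.sum_eq_single (τ n)]
  · simp
    congr 1
  · intro k _ hk
    rw [if_neg (Ne.symm hk), mul_zero]
  · simp

theorem Pm_one : Pm d 1 = 1 := by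
  ext m n
  simp [Pm, Matrix.one_apply, eq_comm]

theorem Pm_unitary (σ : Equiv.Perm (Fin d)) : Pm d σ ∈ Matrix.unitaryGroup (Fin d) ℂ := by
  constructor <;>
    simp only [Matrix.star_eq_conjTranspose, Pm_conjTranspose, Pm_mul] <;>
    simp [Pm_one]

theorem Pm_conj_diagonal (σ : Equiv.Perm (Fin d)) (a : Fin d → ℂ) :
    Pm d σ * Matrix.diagonal a * (Pm d σ)ᴴ = Matrix.diagonal (fun m => a (σ⁻¹ m)) := by
  rw [Pm_conjTranspose]
  ext m n
  rw [Matrix.mul_apply]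
  simp only [Matrix.mul_diagonal, Pm, Matrix.of_apply, Matrix.diagonal_apply]
  rw [Finset.sum_eq_single (σ⁻¹ n)]
  · by_cases h : m = n
    · subst h; simp
    · rw [if_neg (by simpa using Ne.symm h)]
      simp [h]
  · intro k _ hk
    rw [if_neg (Ne.symm hk), mul_zero]
  · simp

def epsC (b : Bool) : ℂ := if b then 1 else -1

theorem epsC_mul_self (b : Bool) : epsC b * epsC b = 1 := by cases b <;> simp [epsC]

theorem star_epsC (b : Bool) : star (epsC b) = epsC b := by cases b <;> simp [epsC]

theorem sum_eps_mul (m n : Fin d) (h : m ≠ n) :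
    ∑ s : Fin d → Bool, epsC (s m) * epsC (s n) = 0 := by
  classical
  refine Finset.sum_ninvolution (fun s => Function.update s m (!s m)) ?_ ?_ (by simp) ?_
  · intro s
    rw [Function.update_self, Function.update_of_ne (Ne.symm h)]
    cases s m <;> cases s n <;> simp [epsC]
  · intro s _
    intro hc
    have := congrArg (fun f => f m) hc
    simp at this
  · intro s
    funext j
    by_cases hj : j = m
    · subst hj; simp
    · simp [Function.update_of_ne hj]

theorem RepC.deph : RepC d 1 (fun A => Matrix.diagonal (fun i => A i i)) := by
  classical
  refine ⟨Fin d → Bool, by infer_instance, fun _ => ((2 ^ d : ℝ))⁻¹,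
    fun s => Matrix.diagonal (fun i => epsC (s i)), ?_, ?_, ?_⟩
  · rw [Finset.sum_const, Finset.card_univ, Fintype.card_fun]
    simp [nsmul_eq_mul]
  · intro s
    constructor <;>
      · simp only [Matrix.star_eq_conjTranspose, Matrix.diagonal_conjTranspose,
          Matrix.diagonal_mul_diagonal]
        rw [← Matrix.diagonal_one]
        congr 1
        funext i
        simp [Pi.star_apply, star_epsC, epsC_mul_self]
  · intro A
    ext m n
    dsimp only
    rw [Matrix.sum_apply]
    have hent : ∀ s : Fin d → Bool,
        (Matrix.diagonal (fun i => epsC (s i)) * A *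
          (Matrix.diagonal (fun i => epsC (s i)))ᴴ) m n = epsC (s m) * epsC (s n) * A m n := by
      intro s
      rw [Matrix.diagonal_conjTranspose, Matrix.mul_diagonal, Matrix.diagonal_mul]
      simp only [Pi.star_apply, star_epsC]
      ring
    have key : ∑ s : Fin d → Bool, ((2 ^ d : ℝ))⁻¹ • (epsC (s m) * epsC (s n) * A m n)
        = Matrix.diagonal (fun i => A i i) m n := by
      rw [← Finset.smul_sum, ← Finset.sum_mul]
      by_cases h : m = n
      · subst h
        rw [Finset.sum_congr rfl fun s _ => epsC_mul_self (s m), Finset.sum_const,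
          Finset.card_univ, Fintype.card_fun, Matrix.diagonal_apply_eq]
        simp only [Fintype.card_bool, Fintype.card_fin, nsmul_eq_mul, Nat.cast_pow,
          Nat.cast_ofNat, mul_one]
        rw [Complex.real_smul]
        push_cast
        rw [← mul_assoc, inv_mul_cancel₀ (pow_ne_zero d (by norm_num : (2:ℂ) ≠ 0)), one_mul]
      · rw [sum_eps_mul m n h]
        simp [Matrix.diagonal_apply_ne _ h]
    rw [← key]
    exact Finset.sum_congr rfl fun s _ => by rw [Matrix.smul_apply, hent s]

theorem sum_mul_ite' (w : Fin d → ℂ) (x : Fin d) (c₁ : ℂ) (t : Fin d → ℂ) :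
    ∑ i, w i * (if i = x then c₁ else t i) = (∑ i, w i * t i) - w x * t x + w x * c₁ := by
  have h : ∀ i, w i * (if i = x then c₁ else t i)
      = w i * t i + (if i = x then w x * c₁ - w x * t x else 0) := by
    intro i
    by_cases hi : i = x
    · subst hi; simp
    · simp [hi]
  rw [Finset.sum_congr rfl fun i _ => h i, Finset.sum_add_distrib,
    Finset.sum_ite_eq' Finset.univ x]
  simp only [Finset.mem_univ, if_pos]
  ring

theorem star_identity (p : Fin d) (u v a : Fin d → ℂ)
    (hu : ∑ i, u i = 0) (hv : ∑ j, v j = 0) (m : Fin d) :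
    (∑ i, ∑ j, u i * v j *
        (a (Equiv.swap j p (Equiv.swap i p m)) - a (Equiv.swap i p m)
          - a (Equiv.swap j p m) + a m))
      + ∑ i, u i * v i * (a (Equiv.swap i p m) - a m)
    = u m * ∑ j, v j * a j := by
  classical
  set S := ∑ j, v j * a j with hS
  have hG : ∀ x, (∑ j, v j * a (Equiv.swap j p x))
      = if x = p then S else v x * (a p - a x) := by
    intro x
    by_cases hx : x = p
    · subst hx
      rw [if_pos rfl, hS]
      exact Finset.sum_congr rfl fun j _ => by rw [Equiv.swap_apply_right]
    · rw [if_neg hx]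
      have h1 : ∀ j, a (Equiv.swap j p x) = if j = x then a p else a x := by
        intro j
        by_cases hj : j = x
        · subst hj; rw [Equiv.swap_apply_left, if_pos rfl]
        · rw [Equiv.swap_apply_of_ne_of_ne (Ne.symm hj) hx, if_neg hj]
      rw [Finset.sum_congr rfl fun j _ => by rw [h1 j]]
      rw [sum_mul_ite' v x (a p) (fun _ => a x)]
      rw [← Finset.sum_mul, hv]
      ring
  have hinner : ∀ i, (∑ j, u i * v j *
        (a (Equiv.swap j p (Equiv.swap i p m)) - a (Equiv.swap i p m)
          - a (Equiv.swap j p m) + a m))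
      = u i * (∑ j, v j * a (Equiv.swap j p (Equiv.swap i p m)))
        - u i * (∑ j, v j * a (Equiv.swap j p m)) := by
    intro i
    have h2 : ∀ j, u i * v j *
        (a (Equiv.swap j p (Equiv.swap i p m)) - a (Equiv.swap i p m)
          - a (Equiv.swap j p m) + a m)
      = u i * (v j * a (Equiv.swap j p (Equiv.swap i p m)))
        - u i * a (Equiv.swap i p m) * v j
        - u i * (v j * a (Equiv.swap j p m)) + u i * a m * v j := fun j => by ring
    rw [Finset.sum_congr rfl fun j _ => h2 j]
    rw [Finset.sum_add_distrib, Finset.sum_sub_distrib, Finset.sum_sub_distrib,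
      ← Finset.mul_sum, ← Finset.mul_sum, ← Finset.mul_sum, ← Finset.mul_sum, hv]
    ring
  rw [Finset.sum_congr rfl fun i _ => hinner i, Finset.sum_sub_distrib,
    ← Finset.sum_mul, hu, zero_mul, sub_zero]
  by_cases hm : m = p
  · subst hm
    have h3 : ∀ i, Equiv.swap i m m = i := fun i => Equiv.swap_apply_right i m
    have h5 : (∑ i, u i * ∑ j, v j * a (Equiv.swap j m (Equiv.swap i m m)))
        = ∑ i, u i * (if i = m then S else v i * (a m - a i)) :=
      Finset.sum_congr rfl fun i _ => by rw [h3 i, hG i]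
    have h6 : (∑ i, u i * v i * (a (Equiv.swap i m m) - a m))
        = ∑ i, u i * v i * (a i - a m) :=
      Finset.sum_congr rfl fun i _ => by rw [h3 i]
    rw [h5, h6, sum_mul_ite' u m S (fun i => v i * (a m - a i))]
    have h4 : ∀ i, u i * (v i * (a m - a i)) + u i * v i * (a i - a m) = 0 := fun i => by ring
    have h7 : (∑ i, u i * (v i * (a m - a i))) + (∑ i, u i * v i * (a i - a m)) = 0 := by
      rw [← Finset.sum_add_distrib]
      exact (Finset.sum_congr rfl fun i _ => h4 i).trans Finset.sum_const_zero
    have h8 : (∑ i, u i * (v i * (a m - a i))) = - ∑ i, u i * v i * (a i - a m) := by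
      linear_combination h7
    rw [h8]
    ring
  · have hτ : ∀ i, Equiv.swap i p m = if i = m then p else m := by
      intro i
      by_cases h : i = m
      · subst h; rw [Equiv.swap_apply_left, if_pos rfl]
      · rw [Equiv.swap_apply_of_ne_of_ne (Ne.symm h) hm, if_neg h]
    have hGt : ∀ i, (∑ j, v j * a (Equiv.swap j p (Equiv.swap i p m)))
        = if i = m then S else v m * (a p - a m) := by
      intro i
      rw [hτ i]
      by_cases h : i = m
      · rw [if_pos h, if_pos h, hG p, if_pos rfl]
      · rw [if_neg h, if_neg h, hG m, if_neg hm]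
    have ha : ∀ i, u i * v i * (a (Equiv.swap i p m) - a m)
        = if i = m then u i * v i * (a p - a m) else 0 := by
      intro i
      rw [hτ i]
      by_cases h : i = m
      · rw [if_pos h, if_pos h]
      · rw [if_neg h, if_neg h]; ring
    rw [Finset.sum_congr rfl fun i _ => by rw [hGt i],
      Finset.sum_congr rfl fun i _ => ha i,
      sum_mul_ite' u m S (fun _ => v m * (a p - a m)),
      Finset.sum_ite_eq' Finset.univ m, ← Finset.sum_mul, hu]
    simp only [Finset.mem_univ, if_pos]
    ring

abbrev PermIdx (d : ℕ) : Type := (Fin d × Fin d × Fin 4) ⊕ (Fin d × Fin 2)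

def sigfun (p : Fin d) : PermIdx d → Equiv.Perm (Fin d)
  | .inl (i, j, k) => ![Equiv.swap i p * Equiv.swap j p, Equiv.swap i p, Equiv.swap j p, 1] k
  | .inr (i, k) => ![Equiv.swap i p, 1] k

def lamfun (u v : Fin d → ℝ) : PermIdx d → ℝ
  | .inl (i, j, k) => u i * v j * ![1, -1, -1, 1] k
  | .inr (i, k) => u i * v i * ![1, -1] k

theorem lamfun_sum (u v : Fin d → ℝ) : ∑ t : PermIdx d, lamfun u v t = 0 := by
  rw [Fintype.sum_sum_type]
  have h1 : ∑ x : Fin d × Fin d × Fin 4, lamfun u v (.inl x) = 0 := by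
    rw [Fintype.sum_prod_type]
    refine Finset.sum_eq_zero fun i _ => ?_
    rw [Fintype.sum_prod_type]
    refine Finset.sum_eq_zero fun j _ => ?_
    rw [Fin.sum_univ_four]
    simp [lamfun]
  have h2 : ∑ x : Fin d × Fin 2, lamfun u v (.inr x) = 0 := by
    rw [Fintype.sum_prod_type]
    refine Finset.sum_eq_zero fun i _ => ?_
    rw [Fin.sum_univ_two]
    simp [lamfun]
  rw [h1, h2, add_zero]

theorem RepC.diagKey (p : Fin d) (u v : Fin d → ℝ)
    (hu : ∑ i, u i = 0) (hv : ∑ i, v i = 0) :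
    RepC d 0 (fun A => (Matrix.trace (Matrix.diagonal (fun i => (v i : ℂ)) * A)) •
      Matrix.diagonal (fun i => (u i : ℂ))) := by
  classical
  have hperm : RepC d 0 (fun A => ∑ t : PermIdx d,
      lamfun u v t • (Pm d (sigfun p t) * A * (Pm d (sigfun p t))ᴴ)) :=
    ⟨PermIdx d, inferInstance, lamfun u v, fun t => Pm d (sigfun p t), lamfun_sum u v,
      fun t => Pm_unitary _, fun _ => rfl⟩
  have hcomp := hperm.comp (RepC.deph (d := d))
  rw [zero_mul] at hcomp
  refine hcomp.congr ?_
  intro A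
  set a : Fin d → ℂ := fun i => A i i with ha
  have hterm : ∀ t : PermIdx d, Pm d (sigfun p t) * Matrix.diagonal a * (Pm d (sigfun p t))ᴴ
      = Matrix.diagonal (fun m => a ((sigfun p t)⁻¹ m)) := fun t => Pm_conj_diagonal _ _
  rw [Finset.sum_congr rfl fun t _ => by rw [hterm t]]
  have htr : Matrix.trace (Matrix.diagonal (fun i => (v i : ℂ)) * A) = ∑ j, (v j : ℂ) * a j := by
    rw [Matrix.trace]
    exact Finset.sum_congr rfl fun j _ => by rw [Matrix.diag, Matrix.diagonal_mul]
  rw [htr]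
  ext m n
  rw [Matrix.sum_apply]
  by_cases hmn : m = n
  · subst hmn
    rw [Finset.sum_congr rfl fun (t : PermIdx d) _ => by
      rw [Matrix.smul_apply, Matrix.diagonal_apply_eq]]
    rw [Matrix.smul_apply, Matrix.diagonal_apply_eq, smul_eq_mul]
    have key := star_identity p (fun i => ((u i : ℝ) : ℂ)) (fun j => ((v j : ℝ) : ℂ)) a
      (by exact_mod_cast hu) (by exact_mod_cast hv) m
    have hinl : ∀ i j : Fin d, (∑ k : Fin 4,
        lamfun u v (.inl (i, j, k)) • a ((sigfun p (.inl (i, j, k)))⁻¹ m))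
        = ((u i : ℂ)) * ((v j : ℂ)) * (a (Equiv.swap j p (Equiv.swap i p m))
            - a (Equiv.swap i p m) - a (Equiv.swap j p m) + a m) := by
      intro i j
      rw [Fin.sum_univ_four]
      simp only [lamfun, sigfun, Matrix.cons_val_zero, Matrix.cons_val_one, Matrix.head_cons,
        Matrix.cons_val_two, Matrix.tail_cons, Matrix.cons_val_three, _root_.mul_inv_rev,
        Equiv.swap_inv, inv_one, Equiv.Perm.mul_apply, Equiv.Perm.one_apply, Complex.real_smul]
      push_cast
      ring
    have hinr : ∀ i : Fin d, (∑ k : Fin 2,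
        lamfun u v (.inr (i, k)) • a ((sigfun p (.inr (i, k)))⁻¹ m))
        = ((u i : ℂ)) * ((v i : ℂ)) * (a (Equiv.swap i p m) - a m) := by
      intro i
      rw [Fin.sum_univ_two]
      simp only [lamfun, sigfun, Matrix.cons_val_zero, Matrix.cons_val_one, Matrix.head_cons,
        Equiv.swap_inv, inv_one, Equiv.Perm.one_apply, Complex.real_smul]
      push_cast
      ring
    rw [Fintype.sum_sum_type, Fintype.sum_prod_type, Fintype.sum_prod_type]
    have e1 : ∀ i : Fin d, (∑ y : Fin d × Fin 4,
        lamfun u v (Sum.inl (i, y)) • a ((sigfun p (Sum.inl (i, y)))⁻¹ m))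
        = ∑ j : Fin d, ((u i : ℂ)) * ((v j : ℂ)) * (a (Equiv.swap j p (Equiv.swap i p m))
            - a (Equiv.swap i p m) - a (Equiv.swap j p m) + a m) := by
      intro i
      rw [Fintype.sum_prod_type]
      exact Finset.sum_congr rfl fun j _ => hinl i j
    rw [Finset.sum_congr rfl fun i _ => e1 i,
      Finset.sum_congr rfl fun i _ => hinr i, key]
    ring
  · rw [Matrix.smul_apply, Matrix.diagonal_apply_ne _ hmn, smul_zero]
    refine Finset.sum_eq_zero fun t _ => ?_
    rw [Matrix.smul_apply, Matrix.diagonal_apply_ne _ hmn, smul_zero]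

theorem RepC.unit_conj (V : Matrix (Fin d) (Fin d) ℂ) (hV : V ∈ Matrix.unitaryGroup (Fin d) ℂ) :
    RepC d 1 (fun A => V * A * Vᴴ) :=
  ⟨Unit, by infer_instance, fun _ => 1, fun _ => V, by simp, fun _ => hV,
    fun A => by simp⟩

theorem trace_eigenvalues (E : Matrix (Fin d) (Fin d) ℂ) (hE : E.IsHermitian)
    (hEt : E.trace = 0) : ∑ i, hE.eigenvalues i = 0 := by
  have h1 : E.trace = ∑ i, ((hE.eigenvalues i : ℝ) : ℂ) := by
    conv_lhs => rw [hE.spectral_theorem, Unitary.conjStarAlgAut_apply]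
    rw [Matrix.trace_mul_comm, ← Matrix.mul_assoc]
    rw [show (star (hE.eigenvectorUnitary : Matrix (Fin d) (Fin d) ℂ)) *
        (hE.eigenvectorUnitary : Matrix (Fin d) (Fin d) ℂ) = 1 from hE.eigenvectorUnitary.2.1]
    rw [Matrix.one_mul, Matrix.trace_diagonal]
    rfl
  rw [hEt] at h1
  exact_mod_cast h1.symm

theorem RepC.atom (p : Fin d) (E F : Matrix (Fin d) (Fin d) ℂ) (hE : Eᴴ = E)
    (hEt : E.trace = 0) (hF : Fᴴ = F) (hFt : F.trace = 0) :
    RepC d 0 (fun A => (Matrix.trace (E * A)) • F) := by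
  have hE' : E.IsHermitian := hE
  have hF' : F.IsHermitian := hF
  set V : Matrix (Fin d) (Fin d) ℂ := (hE'.eigenvectorUnitary : Matrix (Fin d) (Fin d) ℂ) with hVdef
  set W : Matrix (Fin d) (Fin d) ℂ := (hF'.eigenvectorUnitary : Matrix (Fin d) (Fin d) ℂ) with hWdef
  have hVu : V ∈ Matrix.unitaryGroup (Fin d) ℂ := hE'.eigenvectorUnitary.2
  have hWu : W ∈ Matrix.unitaryGroup (Fin d) ℂ := hF'.eigenvectorUnitary.2
  have hmid := RepC.diagKey p (fun i => hF'.eigenvalues i) (fun i => hE'.eigenvalues i)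
    (trace_eigenvalues F hF' hFt) (trace_eigenvalues E hE' hEt)
  have hadW := RepC.unit_conj W hWu
  have hVHu : Vᴴ ∈ Matrix.unitaryGroup (Fin d) ℂ := by
    constructor
    · simpa [Matrix.star_eq_conjTranspose, Matrix.conjTranspose_conjTranspose] using hVu.2
    · simpa [Matrix.star_eq_conjTranspose, Matrix.conjTranspose_conjTranspose] using hVu.1
  have hadV := RepC.unit_conj Vᴴ hVHu
  have hcomp := hadW.comp (hmid.comp hadV)
  rw [mul_comm, zero_mul, zero_mul] at hcomp
  refine hcomp.congr ?_
  intro A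
  have hVH : (Vᴴ)ᴴ = V := Matrix.conjTranspose_conjTranspose V
  rw [hVH]
  have hEdec : E = V * Matrix.diagonal (fun i => ((hE'.eigenvalues i : ℝ) : ℂ)) * Vᴴ := by
    conv_lhs => rw [hE'.spectral_theorem]
    rfl
  have hFdec : F = W * Matrix.diagonal (fun i => ((hF'.eigenvalues i : ℝ) : ℂ)) * Wᴴ := by
    conv_lhs => rw [hF'.spectral_theorem]
    rfl
  have htr : Matrix.trace (Matrix.diagonal (fun i => ((hE'.eigenvalues i : ℝ) : ℂ))
      * (Vᴴ * A * V)) = Matrix.trace (E * A) := by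
    conv_rhs => rw [hEdec]
    rw [Matrix.mul_assoc (V * Matrix.diagonal _) Vᴴ A,
      Matrix.trace_mul_comm (V * Matrix.diagonal _) (Vᴴ * A),
      ← Matrix.mul_assoc (Vᴴ * A) V (Matrix.diagonal _),
      Matrix.trace_mul_comm _ (Matrix.diagonal _)]
  rw [htr, Matrix.mul_smul, Matrix.smul_mul, ← hFdec]

theorem trace_std_mul (j k : Fin d) (A : Matrix (Fin d) (Fin d) ℂ) :
    Matrix.trace (Matrix.single j k 1 * A) = A k j := by
  classical
  rw [Matrix.trace, Finset.sum_eq_single j]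
  · simp [Matrix.diag]
  · intro m _ hm
    simp [Matrix.diag, Matrix.single_mul_apply_of_ne, hm]
  · simp

theorem std_conjT (j k : Fin d) :
    (Matrix.single j k (1:ℂ))ᴴ = Matrix.single k j 1 := by
  ext m n
  simp only [Matrix.conjTranspose_apply, Matrix.single, Matrix.of_apply,
    apply_ite (star : ℂ → ℂ), star_one, star_zero]
  by_cases h1 : j = n <;> by_cases h2 : k = m <;> simp [h1, h2]

theorem rsm (r : ℝ) (M : Matrix (Fin d) (Fin d) ℂ) : r • M = (r : ℂ) • M := by
  ext m n
  simp [Complex.real_smul]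

theorem double_ite (c : Fin d → Fin d → ℂ) (m n : Fin d) :
    ∑ j, ∑ k, c j k * (if j = m ∧ k = n then 1 else 0) = c m n := by
  classical
  rw [Finset.sum_eq_single m]
  · simp only [true_and]
    rw [Finset.sum_eq_single n] <;> simp +contextual
  · intro j _ hj
    refine Finset.sum_eq_zero fun k _ => ?_
    simp [hj]
  · simp

def Dmat (d : ℕ) (j : Fin d) : Matrix (Fin d) (Fin d) ℂ :=
  Matrix.single j j 1 - ((d:ℂ)⁻¹) • 1

def Smat (d : ℕ) (q : Fin d × Fin d) : Matrix (Fin d) (Fin d) ℂ :=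
  if q.1 = q.2 then 0 else Matrix.single q.1 q.2 (1:ℂ) + Matrix.single q.2 q.1 1

def Kmat (d : ℕ) (q : Fin d × Fin d) : Matrix (Fin d) (Fin d) ℂ :=
  if q.1 = q.2 then 0
  else Complex.I • (Matrix.single q.1 q.2 (1:ℂ) - Matrix.single q.2 q.1 1)

theorem decomp (A : Matrix (Fin d) (Fin d) ℂ) (hA : Aᴴ = A) (htA : A.trace = 0) :
    A = (∑ j, (A j j).re • Dmat d j)
      + ((∑ q : Fin d × Fin d, ((A q.1 q.2).re / 2) • Smat d q)
        + ∑ q : Fin d × Fin d, ((A q.1 q.2).im / 2) • Kmat d q) := by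
  classical
  simp only [Dmat, Smat, Kmat]
  have hsym : ∀ m n, (starRingEnd ℂ) (A m n) = A n m := by
    intro m n
    conv_rhs => rw [← hA]
    rw [Matrix.conjTranspose_apply]
    rfl
  have hreal : ∀ j, ((A j j).re : ℂ) = A j j :=
    fun j => Complex.conj_eq_iff_re.mp (hsym j j)
  have htr0 : ∑ j, ((A j j).re : ℂ) = 0 := by
    rw [Finset.sum_congr rfl fun j _ => hreal j, ← htA]
    rfl
  ext m n
  rw [Matrix.add_apply, Matrix.add_apply, Matrix.sum_apply, Matrix.sum_apply, Matrix.sum_apply]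
  by_cases hmn : m = n
  · subst hmn
    have hT1 : (∑ j, ((A j j).re • (Matrix.single j j (1:ℂ) - ((d:ℂ)⁻¹) • 1)) m m)
        = (A m m).re := by
      have h1 : ∀ j, ((A j j).re • (Matrix.single j j (1:ℂ) - ((d:ℂ)⁻¹) • 1)) m m
          = ((A j j).re : ℂ) * (if j = m then 1 else 0) - ((A j j).re : ℂ) * (d:ℂ)⁻¹ := by
        intro j
        simp only [Matrix.smul_apply, Matrix.sub_apply, Matrix.one_apply, Matrix.smul_apply,
          Matrix.single, Matrix.of_apply, and_self, if_pos rfl, eq_self_iff_true,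
          if_true, Complex.real_smul, smul_eq_mul]
        ring
      rw [Finset.sum_congr rfl fun j _ => h1 j, Finset.sum_sub_distrib, ← Finset.sum_mul,
        htr0, zero_mul, sub_zero]
      simp [mul_ite, Finset.sum_ite_eq']
    have hT2 : (∑ q : Fin d × Fin d, (((A q.1 q.2).re / 2) •
          (if q.1 = q.2 then (0 : Matrix (Fin d) (Fin d) ℂ)
            else Matrix.single q.1 q.2 (1:ℂ) + Matrix.single q.2 q.1 1)) m m)
        = 0 := by
      refine Finset.sum_eq_zero fun q _ => ?_
      by_cases hq : q.1 = q.2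
      · simp [hq]
      · simp only [if_neg hq, Matrix.smul_apply, Matrix.add_apply]
        rw [Matrix.single_apply_of_ne (h := by rintro ⟨h1, h2⟩; exact hq (h1.trans h2.symm)),
          Matrix.single_apply_of_ne (h := by rintro ⟨h1, h2⟩; exact hq (h2.trans h1.symm))]
        simp
    have hT3 : (∑ q : Fin d × Fin d, (((A q.1 q.2).im / 2) •
          (if q.1 = q.2 then (0 : Matrix (Fin d) (Fin d) ℂ)
            else Complex.I • (Matrix.single q.1 q.2 (1:ℂ)
              - Matrix.single q.2 q.1 1))) m m) = 0 := by
      refine Finset.sum_eq_zero fun q _ => ?_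
      by_cases hq : q.1 = q.2
      · simp [hq]
      · simp only [if_neg hq, Matrix.smul_apply, Matrix.sub_apply]
        rw [Matrix.single_apply_of_ne (h := by rintro ⟨h1, h2⟩; exact hq (h1.trans h2.symm)),
          Matrix.single_apply_of_ne (h := by rintro ⟨h1, h2⟩; exact hq (h2.trans h1.symm))]
        simp
    rw [hT1, hT2, hT3]
    simp only [add_zero]
    exact (hreal m).symm
  · have hT1 : (∑ j, ((A j j).re • (Matrix.single j j (1:ℂ) - ((d:ℂ)⁻¹) • 1)) m n)
        = 0 := by
      refine Finset.sum_eq_zero fun j _ => ?_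
      simp only [Matrix.smul_apply, Matrix.sub_apply, Matrix.one_apply, Matrix.smul_apply,
        if_neg hmn]
      rw [Matrix.single_apply_of_ne (h := by rintro ⟨rfl, rfl⟩; exact hmn rfl)]
      simp
    have hT2 : (∑ q : Fin d × Fin d, (((A q.1 q.2).re / 2) •
          (if q.1 = q.2 then (0 : Matrix (Fin d) (Fin d) ℂ)
            else Matrix.single q.1 q.2 (1:ℂ) + Matrix.single q.2 q.1 1)) m n)
        = ((A m n).re / 2 : ℝ) + ((A n m).re / 2 : ℝ) := by
      have h2 : ∀ q : Fin d × Fin d, (((A q.1 q.2).re / 2) •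
          (if q.1 = q.2 then (0 : Matrix (Fin d) (Fin d) ℂ)
            else Matrix.single q.1 q.2 (1:ℂ) + Matrix.single q.2 q.1 1)) m n
          = (((A q.1 q.2).re / 2 : ℝ) : ℂ) * (if q.1 = m ∧ q.2 = n then 1 else 0)
            + (((A q.1 q.2).re / 2 : ℝ) : ℂ) * (if q.2 = m ∧ q.1 = n then 1 else 0) := by
        intro q
        by_cases hq : q.1 = q.2
        · rw [if_pos hq]
          rw [if_neg (by rintro ⟨rfl, rfl⟩; exact hmn hq),
            if_neg (by rintro ⟨rfl, rfl⟩; exact hmn hq.symm)]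
          simp
        · rw [if_neg hq]
          simp only [Matrix.smul_apply, Matrix.add_apply, Matrix.single,
            Matrix.of_apply, Complex.real_smul, smul_eq_mul]
          ring
      rw [Finset.sum_congr rfl fun q _ => h2 q, Finset.sum_add_distrib]
      rw [Fintype.sum_prod_type, Fintype.sum_prod_type]
      rw [double_ite (fun j k => (((A j k).re / 2 : ℝ) : ℂ)) m n]
      have hswap : (∑ j, ∑ k, (((A j k).re / 2 : ℝ) : ℂ) * (if k = m ∧ j = n then 1 else 0))
          = ∑ k, ∑ j, (((A j k).re / 2 : ℝ) : ℂ) * (if k = m ∧ j = n then 1 else 0) :=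
        Finset.sum_comm
      rw [hswap, double_ite (fun k j => (((A j k).re / 2 : ℝ) : ℂ)) m n]
    have hT3 : (∑ q : Fin d × Fin d, (((A q.1 q.2).im / 2) •
          (if q.1 = q.2 then (0 : Matrix (Fin d) (Fin d) ℂ)
            else Complex.I • (Matrix.single q.1 q.2 (1:ℂ)
              - Matrix.single q.2 q.1 1))) m n)
        = (((A m n).im / 2 : ℝ) : ℂ) * Complex.I - (((A n m).im / 2 : ℝ) : ℂ) * Complex.I := by
      have h3 : ∀ q : Fin d × Fin d, (((A q.1 q.2).im / 2) •
          (if q.1 = q.2 then (0 : Matrix (Fin d) (Fin d) ℂ)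
            else Complex.I • (Matrix.single q.1 q.2 (1:ℂ)
              - Matrix.single q.2 q.1 1))) m n
          = (((A q.1 q.2).im / 2 : ℝ) : ℂ) * Complex.I * (if q.1 = m ∧ q.2 = n then 1 else 0)
            - (((A q.1 q.2).im / 2 : ℝ) : ℂ) * Complex.I * (if q.2 = m ∧ q.1 = n then 1 else 0) := by
        intro q
        by_cases hq : q.1 = q.2
        · rw [if_pos hq]
          rw [if_neg (by rintro ⟨rfl, rfl⟩; exact hmn hq),
            if_neg (by rintro ⟨rfl, rfl⟩; exact hmn hq.symm)]
          simp
        · rw [if_neg hq]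
          simp only [Matrix.smul_apply, Matrix.sub_apply, Matrix.single,
            Matrix.of_apply, Complex.real_smul, smul_eq_mul]
          ring
      rw [Finset.sum_congr rfl fun q _ => h3 q, Finset.sum_sub_distrib]
      rw [Fintype.sum_prod_type, Fintype.sum_prod_type]
      rw [double_ite (fun j k => (((A j k).im / 2 : ℝ) : ℂ) * Complex.I) m n]
      have hswap : (∑ j, ∑ k, (((A j k).im / 2 : ℝ) : ℂ) * Complex.I * (if k = m ∧ j = n then 1 else 0))
          = ∑ k, ∑ j, (((A j k).im / 2 : ℝ) : ℂ) * Complex.I * (if k = m ∧ j = n then 1 else 0) :=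
        Finset.sum_comm
      rw [hswap, double_ite (fun k j => (((A j k).im / 2 : ℝ) : ℂ) * Complex.I) m n]
    rw [hT1, hT2, hT3, zero_add]
    have h4 : A n m = (starRingEnd ℂ) (A m n) := (hsym m n).symm
    rw [show ((A n m).re / 2 : ℝ) = ((A m n).re / 2 : ℝ) by rw [h4]; simp,
      show ((A n m).im / 2 : ℝ) = (-(A m n).im / 2 : ℝ) by rw [h4]; simp]
    have := Complex.re_add_im (A m n)
    push_cast
    linear_combination -this

theorem trace_std (j k : Fin d) :
    Matrix.trace (Matrix.single j k (1:ℂ)) = if k = j then 1 else 0 := by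
  have := trace_std_mul j k (1 : Matrix (Fin d) (Fin d) ℂ)
  rw [mul_one] at this
  rw [this, Matrix.one_apply]

theorem Dmat_herm (j : Fin d) : (Dmat d j)ᴴ = Dmat d j := by
  unfold Dmat
  rw [Matrix.conjTranspose_sub, std_conjT, Matrix.conjTranspose_smul, Matrix.conjTranspose_one]
  congr 1
  simp

theorem Dmat_trace (hd : 0 < d) (j : Fin d) : (Dmat d j).trace = 0 := by
  unfold Dmat
  rw [Matrix.trace_sub, Matrix.trace_smul, Matrix.trace_one, trace_std, if_pos rfl]
  simp only [smul_eq_mul, Fintype.card_fin]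
  rw [inv_mul_cancel₀ (by exact_mod_cast hd.ne' : (d:ℂ) ≠ 0), sub_self]

theorem Smat_herm (q : Fin d × Fin d) : (Smat d q)ᴴ = Smat d q := by
  unfold Smat
  by_cases hq : q.1 = q.2
  · simp [hq]
  · rw [if_neg hq, Matrix.conjTranspose_add, std_conjT, std_conjT, add_comm]

theorem Smat_trace (q : Fin d × Fin d) : (Smat d q).trace = 0 := by
  unfold Smat
  by_cases hq : q.1 = q.2
  · simp [hq]
  · rw [if_neg hq, Matrix.trace_add, trace_std, trace_std, if_neg (Ne.symm hq), if_neg hq]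
    simp

theorem Kmat_herm (q : Fin d × Fin d) : (Kmat d q)ᴴ = Kmat d q := by
  unfold Kmat
  by_cases hq : q.1 = q.2
  · simp [hq]
  · rw [if_neg hq, Matrix.conjTranspose_smul, Matrix.conjTranspose_sub,
      std_conjT, std_conjT]
    rw [show star Complex.I = -Complex.I by simp [Complex.star_def, Complex.conj_I]]
    rw [neg_smul, ← smul_neg, neg_sub]

theorem Kmat_trace (q : Fin d × Fin d) : (Kmat d q).trace = 0 := by
  unfold Kmat
  by_cases hq : q.1 = q.2
  · simp [hq]
  · rw [if_neg hq, Matrix.trace_smul, Matrix.trace_sub, trace_std, trace_std,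
      if_neg (Ne.symm hq), if_neg hq]
    simp

theorem smul_herm (r : ℝ) (M : Matrix (Fin d) (Fin d) ℂ) (hM : Mᴴ = M) :
    (((r:ℂ)) • M)ᴴ = ((r:ℂ)) • M := by
  rw [Matrix.conjTranspose_smul, hM]
  congr 1
  simp [Complex.star_def]

theorem smul_trace0 (c : ℂ) (M : Matrix (Fin d) (Fin d) ℂ) (hM : M.trace = 0) :
    (c • M).trace = 0 := by
  rw [Matrix.trace_smul, hM, smul_zero]

/-- The main representation lemma for positive `d`. -/
theorem main_rep (hd : 0 < d) (L : Matrix (Fin d) (Fin d) ℂ →ₗ[ℝ] Matrix (Fin d) (Fin d) ℂ)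
    (hL : ∀ A : Matrix (Fin d) (Fin d) ℂ, Aᴴ = A → A.trace = 0 →
      (L A)ᴴ = L A ∧ (L A).trace = 0) :
    ∃ g, RepC d 0 g ∧ ∀ A : Matrix (Fin d) (Fin d) ℂ, Aᴴ = A → A.trace = 0 → L A = g A := by
  classical
  set p : Fin d := ⟨0, hd⟩ with hp
  have hLD : ∀ j, (L (Dmat d j))ᴴ = L (Dmat d j) ∧ (L (Dmat d j)).trace = 0 :=
    fun j => hL _ (Dmat_herm j) (Dmat_trace hd j)
  have hLS : ∀ q, (L (Smat d q))ᴴ = L (Smat d q) ∧ (L (Smat d q)).trace = 0 :=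
    fun q => hL _ (Smat_herm q) (Smat_trace q)
  have hLK : ∀ q, (L (Kmat d q))ᴴ = L (Kmat d q) ∧ (L (Kmat d q)).trace = 0 :=
    fun q => hL _ (Kmat_herm q) (Kmat_trace q)
  have hrep1 : ∀ j : Fin d, RepC d 0 (fun B => Matrix.trace (Dmat d j * B) • L (Dmat d j)) :=
    fun j => RepC.atom p _ _ (Dmat_herm j) (Dmat_trace hd j) (hLD j).1 (hLD j).2
  have hrep2 : ∀ q : Fin d × Fin d,
      RepC d 0 (fun B => Matrix.trace (((4:ℂ)⁻¹ • Smat d q) * B) • L (Smat d q)) :=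
    fun q => RepC.atom p _ _
      (by simpa using smul_herm (4⁻¹ : ℝ) _ (Smat_herm q))
      (smul_trace0 _ _ (Smat_trace q)) (hLS q).1 (hLS q).2
  have hrep3 : ∀ q : Fin d × Fin d,
      RepC d 0 (fun B => Matrix.trace (((4:ℂ)⁻¹ • Kmat d q) * B) • L (Kmat d q)) :=
    fun q => RepC.atom p _ _
      (by simpa using smul_herm (4⁻¹ : ℝ) _ (Kmat_herm q))
      (smul_trace0 _ _ (Kmat_trace q)) (hLK q).1 (hLK q).2
  have hsum1 : RepC d 0 (fun B => ∑ j : Fin d,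
      Matrix.trace (Dmat d j * B) • L (Dmat d j)) := by
    have := RepC.sum (Finset.univ : Finset (Fin d)) (fun _ => 0) _ (fun j _ => hrep1 j)
    simpa using this
  have hsum2 : RepC d 0 (fun B => ∑ q : Fin d × Fin d,
      Matrix.trace (((4:ℂ)⁻¹ • Smat d q) * B) • L (Smat d q)) := by
    have := RepC.sum (Finset.univ : Finset (Fin d × Fin d)) (fun _ => 0) _ (fun q _ => hrep2 q)
    simpa using this
  have hsum3 : RepC d 0 (fun B => ∑ q : Fin d × Fin d,
      Matrix.trace (((4:ℂ)⁻¹ • Kmat d q) * B) • L (Kmat d q)) := by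
    have := RepC.sum (Finset.univ : Finset (Fin d × Fin d)) (fun _ => 0) _ (fun q _ => hrep3 q)
    simpa using this
  have hg : RepC d 0 (fun B => (∑ j : Fin d, Matrix.trace (Dmat d j * B) • L (Dmat d j))
      + ((∑ q : Fin d × Fin d, Matrix.trace (((4:ℂ)⁻¹ • Smat d q) * B) • L (Smat d q))
        + ∑ q : Fin d × Fin d, Matrix.trace (((4:ℂ)⁻¹ • Kmat d q) * B) • L (Kmat d q))) := by
    have := hsum1.add (hsum2.add hsum3)
    simpa using this
  refine ⟨_, hg, ?_⟩
  intro A hA htA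
  have hsym : ∀ m n, (starRingEnd ℂ) (A m n) = A n m := by
    intro m n
    conv_rhs => rw [← hA]
    rw [Matrix.conjTranspose_apply]
    rfl
  have hreal : ∀ j, ((A j j).re : ℂ) = A j j :=
    fun j => Complex.conj_eq_iff_re.mp (hsym j j)
  -- trace values
  have t1 : ∀ j, Matrix.trace (Dmat d j * A) = (((A j j).re : ℝ) : ℂ) := by
    intro j
    unfold Dmat
    rw [Matrix.sub_mul, Matrix.trace_sub, trace_std_mul, Matrix.smul_mul, Matrix.one_mul,
      Matrix.trace_smul, htA, smul_zero, sub_zero, hreal]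
  have ht1 : ∀ j, (A j j).re • L (Dmat d j) = Matrix.trace (Dmat d j * A) • L (Dmat d j) := by
    intro j
    rw [t1 j, rsm]
  have ht2 : ∀ q : Fin d × Fin d, ((A q.1 q.2).re / 2) • L (Smat d q)
      = Matrix.trace (((4:ℂ)⁻¹ • Smat d q) * A) • L (Smat d q) := by
    intro q
    by_cases hq : q.1 = q.2
    · have h0 : Smat d q = 0 := by unfold Smat; rw [if_pos hq]
      rw [h0, map_zero, smul_zero, smul_zero]
    · have h0 : Smat d q = Matrix.single q.1 q.2 (1:ℂ)
          + Matrix.single q.2 q.1 1 := by unfold Smat; rw [if_neg hq]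
      have htr : Matrix.trace (((4:ℂ)⁻¹ • Smat d q) * A) = (((A q.1 q.2).re / 2 : ℝ) : ℂ) := by
        rw [h0, Matrix.smul_mul, Matrix.trace_smul, Matrix.add_mul, Matrix.trace_add,
          trace_std_mul, trace_std_mul]
        have hadd : A q.2 q.1 + A q.1 q.2 = ((2 * (A q.1 q.2).re : ℝ) : ℂ) := by
          rw [← hsym q.1 q.2]
          rw [add_comm]
          exact Complex.add_conj _
        rw [hadd, smul_eq_mul]
        push_cast
        ring
      rw [htr, rsm]
  have ht3 : ∀ q : Fin d × Fin d, ((A q.1 q.2).im / 2) • L (Kmat d q)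
      = Matrix.trace (((4:ℂ)⁻¹ • Kmat d q) * A) • L (Kmat d q) := by
    intro q
    by_cases hq : q.1 = q.2
    · have h0 : Kmat d q = 0 := by unfold Kmat; rw [if_pos hq]
      rw [h0, map_zero, smul_zero, smul_zero]
    · have h0 : Kmat d q = Complex.I • (Matrix.single q.1 q.2 (1:ℂ)
          - Matrix.single q.2 q.1 1) := by unfold Kmat; rw [if_neg hq]
      have htr : Matrix.trace (((4:ℂ)⁻¹ • Kmat d q) * A) = (((A q.1 q.2).im / 2 : ℝ) : ℂ) := by
        rw [h0, Matrix.smul_mul, Matrix.trace_smul, Matrix.smul_mul, Matrix.trace_smul,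
          Matrix.sub_mul, Matrix.trace_sub, trace_std_mul, trace_std_mul]
        have hsub : A q.2 q.1 - A q.1 q.2
            = -(((2 * (A q.1 q.2).im : ℝ) : ℂ) * Complex.I) := by
          rw [← hsym q.1 q.2]
          have := Complex.sub_conj (A q.1 q.2)
          linear_combination -this
        rw [hsub]
        simp only [smul_eq_mul]
        push_cast
        linear_combination (-(((A q.1 q.2).im : ℂ)) / 2) * Complex.I_mul_I
      rw [htr, rsm]
  conv_lhs => rw [decomp A hA htA]
  rw [map_add, map_add, map_sum, map_sum, map_sum]
  rw [Finset.sum_congr rfl fun j _ => (L.map_smul ((A j j).re) (Dmat d j)).trans (ht1 j)]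
  rw [Finset.sum_congr rfl fun q : Fin d × Fin d => fun _ =>
    (L.map_smul ((A q.1 q.2).re / 2) (Smat d q)).trans (ht2 q)]
  rw [Finset.sum_congr rfl fun q : Fin d × Fin d => fun _ =>
    (L.map_smul ((A q.1 q.2).im / 2) (Kmat d q)).trans (ht3 q)]

end Stmt3Aux

open Matrix

/-- Every real-linear map on the real vector space of traceless Hermitian `d × d`
matrices is a real linear combination, with coefficients summing to zero, of unitary
conjugations `A ↦ U A U†`. (The map `L` is given as a real-linear map on all matrices which
preserves the subspace of traceless Hermitian matrices.) -/
theorem stmt_3 (d : ℕ)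
    (L : Matrix (Fin d) (Fin d) ℂ →ₗ[ℝ] Matrix (Fin d) (Fin d) ℂ)
    (hL : ∀ A : Matrix (Fin d) (Fin d) ℂ, Aᴴ = A → A.trace = 0 →
      (L A)ᴴ = L A ∧ (L A).trace = 0) :
    ∃ (n : ℕ) (lam : Fin n → ℝ) (U : Fin n → Matrix (Fin d) (Fin d) ℂ),
      ∑ i, lam i = 0 ∧ (∀ i, U i ∈ Matrix.unitaryGroup (Fin d) ℂ) ∧
      ∀ A : Matrix (Fin d) (Fin d) ℂ, Aᴴ = A → A.trace = 0 →
        L A = ∑ i, lam i • (U i * A * (U i)ᴴ) := by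
  rcases Nat.eq_zero_or_pos d with hd | hd
  · subst hd
    refine ⟨0, Fin.elim0, Fin.elim0, by simp, fun i => i.elim0, ?_⟩
    intro A _ _
    ext i j
    exact i.elim0
  · obtain ⟨g, hg, hLg⟩ := main_rep hd L hL
    obtain ⟨ι, hι, lam, U, h1, h2, h3⟩ := hg
    letI := hι
    let e : Fin (Fintype.card ι) ≃ ι := (Fintype.equivFin ι).symm
    refine ⟨Fintype.card ι, fun i => lam (e i), fun i => U (e i), ?_,
      fun i => h2 (e i), ?_⟩
    · rw [Equiv.sum_comp e lam, h1]
    · intro A hA htA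
      rw [hLg A hA htA, h3 A]
      exact (Equiv.sum_comp e (fun t => lam t • (U t * A * (U t)ᴴ))).symm
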